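/- Let r ≥ 1 be an integer and let m₁, m₂ be integers coprime to r. Set g := Int.gcd (m₂ − m₁) r. Then the set { ((t₁ + t₂ + 1 : ℕ) : ZMod r) : t₁, t₂ ∈ {0,…,r−1} and r ∣ m₁·(t₁+1) + m₂·t₂ } is equal to the set { ((g·k : ℕ) : ZMod r) : k = 1, 2, …, r/g }. -/

import Mathlib

/-- The set `{g*k mod r : 1 ≤ k ≤ r/g}` is exactly the set of multiples of `g` in `ZMod r`. -/
lemma aux_rhs (r g : ℕ) (hr : 0 < r) (hg : 0 < g) (hgr : g ∣ r) (x : ZMod r) :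
    (∃ k : ℕ, 1 ≤ k ∧ k ≤ r / g ∧ x = ((g * k : ℕ) : ZMod r)) ↔ (g : ZMod r) ∣ x := by
  haveI : NeZero r := ⟨by omega⟩
  constructor
  · rintro ⟨k, -, -, rfl⟩
    exact ⟨(k : ZMod r), by push_cast; ring⟩
  · rintro ⟨y, rfl⟩
    set d := r / g with hd
    have hgd : g * d = r := Nat.mul_div_cancel' hgr
    have hdpos : 0 < d := by
      rcases Nat.eq_zero_or_pos d with h | h
      · simp [h] at hgd; omega
      · exact h
    set n := y.val with hn
    have hy : (n : ZMod r) = y := ZMod.natCast_rightInverse y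
    have hmod : ((g * n : ℕ) : ZMod r) = ((g * (n % d) : ℕ) : ZMod r) := by
      have : g * n = r * (n / d) + g * (n % d) := by
        conv_lhs => rw [← Nat.div_add_mod n d]
        rw [← hgd]; ring
      rw [this]
      push_cast
      simp [ZMod.natCast_self]
    rcases Nat.eq_zero_or_pos (n % d) with h0 | h0
    · refine ⟨d, hdpos, le_refl _, ?_⟩
      have h1 : ((g * d : ℕ) : ZMod r) = 0 := by rw [hgd]; simp [ZMod.natCast_self]
      have h2 : (g : ZMod r) * y = ((g * n : ℕ) : ZMod r) := by
        rw [← hy]; push_cast; ring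
      rw [h2, hmod, h0, h1]
      simp
    · refine ⟨n % d, h0, le_of_lt (Nat.mod_lt _ hdpos), ?_⟩
      have h2 : (g : ZMod r) * y = ((g * n : ℕ) : ZMod r) := by
        rw [← hy]; push_cast; ring
      rw [h2, hmod]

theorem stmt_6 (r : ℕ) (hr : 1 ≤ r) (m₁ m₂ : ℤ)
    (h₁ : Int.gcd m₁ r = 1) (h₂ : Int.gcd m₂ r = 1) :
    {x : ZMod r | ∃ t₁ t₂ : ℕ, t₁ < r ∧ t₂ < r ∧
        (r : ℤ) ∣ m₁ * ((t₁ : ℤ) + 1) + m₂ * (t₂ : ℤ) ∧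
        x = ((t₁ + t₂ + 1 : ℕ) : ZMod r)} =
    {x : ZMod r | ∃ k : ℕ, 1 ≤ k ∧ k ≤ r / Int.gcd (m₂ - m₁) r ∧
        x = ((Int.gcd (m₂ - m₁) r * k : ℕ) : ZMod r)} := by
  haveI : NeZero r := ⟨by omega⟩
  set g : ℕ := Int.gcd (m₂ - m₁) r with hgdef
  have hrz : (r : ℤ) ≠ 0 := by exact_mod_cast (by omega : r ≠ 0)
  have hgpos : 0 < g := Nat.pos_of_ne_zero (by
    intro h
    rw [hgdef] at h
    exact hrz (Int.gcd_eq_zero_iff.mp h).2)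
  have hgr : g ∣ r := by
    have h : ((g : ℤ)) ∣ (r : ℤ) := Int.gcd_dvd_right _ _
    exact_mod_cast h
  ext x
  simp only [Set.mem_setOf_eq]
  rw [aux_rhs r g (by omega) hgpos hgr x]
  constructor
  · rintro ⟨t₁, t₂, ht₁, ht₂, hdvd, hx⟩
    -- Forward: x is a multiple of g
    have h0 : ((m₁ * ((t₁ : ℤ) + 1) + m₂ * (t₂ : ℤ) : ℤ) : ZMod r) = 0 :=
      (ZMod.intCast_zmod_eq_zero_iff_dvd _ _).2 hdvd
    obtain ⟨a, b, hab⟩ : ∃ a b : ℤ, a * m₁ + b * r = 1 := by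
      have := Int.isCoprime_iff_gcd_eq_one.mpr h₁
      obtain ⟨a, b, h⟩ := this
      exact ⟨a, b, h⟩
    have hab' : ((a : ℤ) : ZMod r) * ((m₁ : ℤ) : ZMod r) = 1 := by
      have := congrArg (Int.cast : ℤ → ZMod r) hab
      push_cast at this
      simpa [ZMod.natCast_self] using this
    obtain ⟨c, hc⟩ : (g : ℤ) ∣ (m₂ - m₁) := Int.gcd_dvd_left _ _
    have hc' : ((m₂ : ℤ) : ZMod r) - ((m₁ : ℤ) : ZMod r)
        = (g : ZMod r) * ((c : ℤ) : ZMod r) := by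
      have := congrArg (Int.cast : ℤ → ZMod r) hc
      push_cast at this ⊢
      linear_combination this
    push_cast at h0 hx
    refine ⟨-(a * c * t₂), ?_⟩
    push_cast at hc' ⊢
    linear_combination hx - (a : ZMod r) * t₂ * hc' + (a : ZMod r) * h0
      - ((t₁ : ZMod r) + t₂ + 1) * hab'
  · rintro ⟨y, hy⟩
    -- Backward: produce t₁, t₂
    have hbez : (g : ℤ) = (m₂ - m₁) * Int.gcdA (m₂ - m₁) r + r * Int.gcdB (m₂ - m₁) r :=
      Int.gcd_eq_gcd_ab (m₂ - m₁) r
    set a : ℤ := Int.gcdA (m₂ - m₁) r with ha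
    have hg' : (g : ZMod r) = (((m₂ : ℤ) : ZMod r) - ((m₁ : ℤ) : ZMod r)) * ((a : ℤ) : ZMod r) := by
      have := congrArg (Int.cast : ℤ → ZMod r) hbez
      push_cast at this
      simpa [ZMod.natCast_self] using this
    set t₂z : ZMod r := -(((m₁ : ℤ) : ZMod r) * ((a : ℤ) : ZMod r) * y) with ht₂z
    set sz : ZMod r := x - t₂z with hsz
    set T₂ : ℕ := t₂z.val with hT₂
    have hT₂lt : T₂ < r := ZMod.val_lt t₂z
    have hT₂c : (T₂ : ZMod r) = t₂z := ZMod.natCast_rightInverse t₂z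
    have hkey : ((m₁ : ℤ) : ZMod r) * sz + ((m₂ : ℤ) : ZMod r) * t₂z = 0 := by
      rw [hsz, ht₂z, hy]
      linear_combination ((m₁ : ℤ) : ZMod r) * y * hg'
    by_cases hs0 : sz.val = 0
    · -- s ≡ 0, use t₁ = r - 1
      have hszz : sz = 0 := (ZMod.val_eq_zero sz).mp hs0
      refine ⟨r - 1, T₂, by omega, hT₂lt, ?_, ?_⟩
      · rw [← ZMod.intCast_zmod_eq_zero_iff_dvd]
        push_cast
        have h1 : ((r : ℕ) : ZMod r) = 0 := ZMod.natCast_self r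
        have h2 : ((r - 1 : ℕ) : ZMod r) = (r : ZMod r) - 1 := by
          have h3 : (r - 1) + 1 = r := by omega
          calc ((r - 1 : ℕ) : ZMod r) = (((r-1)+1 : ℕ) : ZMod r) - 1 := by push_cast; ring
            _ = (r : ZMod r) - 1 := by rw [h3]
        rw [h2, hT₂c, h1]
        linear_combination hkey - ((m₁ : ℤ) : ZMod r) * hszz
      · have h2 : (((r - 1) + T₂ + 1 : ℕ) : ZMod r) = (T₂ : ZMod r) := by
          have h3 : (r - 1) + T₂ + 1 = r + T₂ := by omega
          rw [h3]; push_cast; simp [ZMod.natCast_self]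
        rw [h2, hT₂c]
        have h4 := hszz
        rw [hsz] at h4
        linear_combination h4
    · -- s.val ≥ 1, use t₁ = s.val - 1
      have hvs : ((sz.val : ℕ) : ZMod r) = sz := ZMod.natCast_rightInverse sz
      refine ⟨sz.val - 1, T₂, by have := ZMod.val_lt sz; omega, hT₂lt, ?_, ?_⟩
      · rw [← ZMod.intCast_zmod_eq_zero_iff_dvd]
        push_cast
        have h2 : ((sz.val - 1 : ℕ) : ZMod r) = sz - 1 := by
          have h3 : (sz.val - 1) + 1 = sz.val := by omega
          calc ((sz.val - 1 : ℕ) : ZMod r) = (((sz.val - 1)+1 : ℕ) : ZMod r) - 1 := by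
                push_cast; ring
            _ = sz - 1 := by rw [h3, hvs]
        rw [h2, hT₂c]
        linear_combination hkey
      · have h2 : ((sz.val - 1 + T₂ + 1 : ℕ) : ZMod r) = sz + (T₂ : ZMod r) := by
          have h3 : sz.val - 1 + T₂ + 1 = sz.val + T₂ := by omega
          rw [h3]; push_cast; rw [hvs]
        rw [h2, hT₂c, hsz]
        ring
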